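/- For every [v] ∈ E there exists a nonzero w ∈ K^n with F(v)·w = 0, unique up to a scalar multiple, and this w satisfies [w] ∈ E; moreover the induced map σ : E → E, σ([v]) := [w], is well defined and bijective, and consequently X_2 := {([v],[w]) ∈ ℙ^{n−1}(K) × ℙ^{n−1}(K) : F(v)·w = 0} = {([v], σ([v])) : [v] ∈ E}, so the projection onto the first coordinate is a bijection from X_2 onto E. -/

import Mathlib

open Matrix

/-- Row index type for the multilinearized relations of the multiparameter quantum
affine `n`-space: pairs `(i,j)` with `i < j`. -/
def quantumRowIdx (n : ℕ) := {p : Fin n × Fin n // p.1 < p.2}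

instance (n : ℕ) : Fintype (quantumRowIdx n) := by
  unfold quantumRowIdx; infer_instance

instance (n : ℕ) : DecidableEq (quantumRowIdx n) := by
  unfold quantumRowIdx; infer_instance

/-- The `(n(n−1)/2) × n` matrix `F(v)` whose row indexed by `(i,j)`, `i < j`, has entry
`v j` in column `i`, entry `−q i j * v i` in column `j`, and zeros elsewhere. -/
def quantumMatrixFn {K : Type*} [Field K] {n : ℕ} (q : Fin n → Fin n → K)
    (v : Fin n → K) : Matrix (quantumRowIdx n) (Fin n) K :=
  fun r k =>
    if k = r.1.1 then v r.1.2 else if k = r.1.2 then -q r.1.1 r.1.2 * v r.1.1 else 0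

/-- `E ⊆ ℙ^{n−1}(K)` is the locus of `[v]` where every `n × n` minor of `F(v)`
vanishes. -/
def quantumAffineNE (K : Type*) [Field K] {n : ℕ} (q : Fin n → Fin n → K) :
    Set (Projectivization K (Fin n → K)) :=
  {p | ∀ (v : Fin n → K) (hv : v ≠ 0), Projectivization.mk K v hv = p →
    ∀ r : Fin n ↪ quantumRowIdx n, ((quantumMatrixFn q v).submatrix r id).det = 0}

/-- `X₂ ⊆ ℙ^{n−1}(K) × ℙ^{n−1}(K)` is the set of pairs `([v],[w])` with `F(v)·w = 0`. -/
def quantumAffineNX2 (K : Type*) [Field K] {n : ℕ} (q : Fin n → Fin n → K) :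
    Set (Projectivization K (Fin n → K) × Projectivization K (Fin n → K)) :=
  {pq | ∃ (v : Fin n → K) (hv : v ≠ 0) (w : Fin n → K) (hw : w ≠ 0),
    pq = (Projectivization.mk K v hv, Projectivization.mk K w hw) ∧
    (quantumMatrixFn q v) *ᵥ w = 0}

namespace QAux

variable {K : Type*} [Field K] {n : ℕ}

noncomputable def qsupp (v : Fin n → K) : Finset (Fin n) :=
  letI := Classical.decEq K
  Finset.univ.filter (fun c => v c ≠ 0)

lemma mem_qsupp {v : Fin n → K} {c : Fin n} : c ∈ qsupp v ↔ v c ≠ 0 := by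
  simp [qsupp]

lemma qsupp_nonempty {v : Fin n → K} (hv : v ≠ 0) : (qsupp v).Nonempty := by
  obtain ⟨c, hc⟩ := Function.ne_iff.mp hv
  exact ⟨c, mem_qsupp.mpr hc⟩

noncomputable def qmax (v : Fin n → K) (hv : v ≠ 0) : Fin n :=
  (qsupp v).max' (qsupp_nonempty hv)

lemma qmax_ne (v : Fin n → K) (hv : v ≠ 0) : v (qmax v hv) ≠ 0 :=
  mem_qsupp.mp ((qsupp v).max'_mem _)

lemma le_qmax {v : Fin n → K} (hv : v ≠ 0) {c : Fin n} (hc : v c ≠ 0) :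
    c ≤ qmax v hv :=
  Finset.le_max' _ _ (mem_qsupp.mpr hc)

lemma qmax_congr {v v' : Fin n → K} (hv : v ≠ 0) (hv' : v' ≠ 0)
    (h : ∀ c, v c ≠ 0 ↔ v' c ≠ 0) : qmax v hv = qmax v' hv' := by
  apply le_antisymm
  · exact le_qmax hv' ((h _).mp (qmax_ne v hv))
  · exact le_qmax hv ((h _).mpr (qmax_ne v' hv'))

lemma mulVec_apply (q : Fin n → Fin n → K) (v w : Fin n → K) {i j : Fin n} (h : i < j) :
    (quantumMatrixFn q v *ᵥ w) ⟨(i, j), h⟩ = v j * w i - q i j * v i * w j := by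
  classical
  have hij : i ≠ j := ne_of_lt h
  simp only [Matrix.mulVec, dotProduct, quantumMatrixFn]
  rw [Finset.sum_congr rfl (g := fun k =>
      (if k = i then v j * w i else 0) + (if k = j then -q i j * v i * w j else 0)) ?_]
  · rw [Finset.sum_add_distrib, Finset.sum_ite_eq', Finset.sum_ite_eq']
    simp; ring
  · intro k _
    by_cases h1 : k = i
    · subst h1; simp [hij, Ne.symm hij]
    · by_cases h2 : k = j
      · subst h2; simp [h1]
      · simp [h1, h2]

lemma mulVec_smul_left (q : Fin n → Fin n → K) (c : K) (v w : Fin n → K) :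
    quantumMatrixFn q (c • v) *ᵥ w = c • (quantumMatrixFn q v *ᵥ w) := by
  funext r
  obtain ⟨⟨i, j⟩, hij⟩ := r
  change _ = c * (quantumMatrixFn q v *ᵥ w) ⟨(i, j), hij⟩
  rw [mulVec_apply q _ _ hij, mulVec_apply q _ _ hij]
  simp only [Pi.smul_apply, smul_eq_mul]
  ring

lemma submatrix_mulVec_apply (M : Matrix (quantumRowIdx n) (Fin n) K)
    (r : Fin n → quantumRowIdx n) (w : Fin n → K) (c : Fin n) :
    ((M.submatrix r id) *ᵥ w) c = (M *ᵥ w) (r c) := rfl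

/-- Easy direction: a nonzero kernel vector forces all maximal minors to vanish. -/
lemma mem_E_of_kernel (q : Fin n → Fin n → K) {v : Fin n → K} (hv : v ≠ 0)
    {w : Fin n → K} (hw : w ≠ 0) (hker : quantumMatrixFn q v *ᵥ w = 0) :
    Projectivization.mk K v hv ∈ quantumAffineNE K q := by
  intro v' hv' heq r
  obtain ⟨a, ha⟩ := (Projectivization.mk_eq_mk_iff K v' v hv' hv).mp heq
  have hker' : quantumMatrixFn q v' *ᵥ w = 0 := by
    rw [← ha, Units.smul_def, mulVec_smul_left, hker, smul_zero]
  apply Matrix.exists_mulVec_eq_zero_iff.mp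
  refine ⟨w, hw, ?_⟩
  funext c
  rw [submatrix_mulVec_apply, hker']
  rfl

def rowEmbFun (i j k : Fin n) (hij : i < j) (hjk : j < k) : Fin n → quantumRowIdx n :=
  fun c =>
    if c = i then ⟨(i, j), hij⟩
    else if c = j then ⟨(j, k), hjk⟩
    else if hck : c = k then ⟨(i, k), hij.trans hjk⟩
    else if h : c < k then ⟨(c, k), h⟩
    else ⟨(k, c), (not_lt.mp h).lt_of_ne (Ne.symm hck)⟩

def rowInvFun (i j k : Fin n) : quantumRowIdx n → Fin n := fun p =>
  if p.1 = (i, j) then i else if p.1 = (j, k) then j else if p.1 = (i, k) then k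
  else if p.1.1 = k then p.1.2 else p.1.1

lemma rowInv_left (i j k : Fin n) (hij : i < j) (hjk : j < k) :
    Function.LeftInverse (rowInvFun i j k) (rowEmbFun i j k hij hjk) := by
  intro c
  have hik := hij.trans hjk
  by_cases hci : c = i
  · simp [rowEmbFun, rowInvFun, hci]
  · by_cases hcj : c = j
    · simp [rowEmbFun, rowInvFun, hci, hcj, Prod.ext_iff, hij.ne']
    · by_cases hck : c = k
      · simp [rowEmbFun, rowInvFun, hci, hcj, hck, Prod.ext_iff, hjk.ne', hij.ne, hik.ne']
      · by_cases h : c < k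
        · simp [rowEmbFun, rowInvFun, hci, hcj, hck, h, Prod.ext_iff, hjk.ne']
        · simp [rowEmbFun, rowInvFun, hci, hcj, hck, h, Prod.ext_iff, hik.ne', hjk.ne']

/-- Hard direction: membership in `E` forces the cocycle condition on the support. -/
lemma coc_of_mem_E (q : Fin n → Fin n → K) (hq : ∀ i j : Fin n, i < j → q i j ≠ 0)
    {v : Fin n → K} (hv : v ≠ 0)
    (hE : Projectivization.mk K v hv ∈ quantumAffineNE K q) :
    ∀ i j k : Fin n, i < j → j < k → v i ≠ 0 → v j ≠ 0 → v k ≠ 0 →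
      q i j * q j k = q i k := by
  intro i j k hij hjk hvi hvj hvk
  by_contra hne
  classical
  set r := rowEmbFun i j k hij hjk with hr
  have hdet := hE v hv rfl ⟨r, (rowInv_left i j k hij hjk).injective⟩
  obtain ⟨w, hw0, hker⟩ := Matrix.exists_mulVec_eq_zero_iff.mpr hdet
  have key : ∀ c, (quantumMatrixFn q v *ᵥ w) (r c) = 0 := fun c => by
    have h := congrFun hker c
    rw [Function.Embedding.coeFn_mk] at h
    exact h
  have ri : r i = ⟨(i, j), hij⟩ := by simp [hr, rowEmbFun]; rfl
  have rj : r j = ⟨(j, k), hjk⟩ := by simp [hr, rowEmbFun, hij.ne']; rfl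
  have rk : r k = ⟨(i, k), hij.trans hjk⟩ := by
    simp [hr, rowEmbFun, (hij.trans hjk).ne', hjk.ne']; rfl
  have e1 : v j * w i - q i j * v i * w j = 0 := by
    have := key i; rw [ri, mulVec_apply q v w hij] at this; exact this
  have e2 : v k * w j - q j k * v j * w k = 0 := by
    have := key j; rw [rj, mulVec_apply q v w hjk] at this; exact this
  have e3 : v k * w i - q i k * v i * w k = 0 := by
    have := key k; rw [rk, mulVec_apply q v w (hij.trans hjk)] at this; exact this
  have hwk : w k = 0 := by
    have h2 : (q i k - q i j * q j k) * (v i * (v j * w k)) = 0 := by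
      linear_combination v k * e1 + q i j * v i * e2 - v j * e3
    rcases mul_eq_zero.mp h2 with h | h
    · exact absurd (sub_eq_zero.mp h).symm hne
    · rcases mul_eq_zero.mp h with h | h
      · exact absurd h hvi
      · rcases mul_eq_zero.mp h with h | h
        · exact absurd h hvj
        · exact h
  have hwj : w j = 0 := by
    have : v k * w j = 0 := by linear_combination e2 + q j k * v j * hwk
    exact (mul_eq_zero.mp this).resolve_left hvk
  have hwi : w i = 0 := by
    have : v k * w i = 0 := by linear_combination e3 + q i k * v i * hwk
    exact (mul_eq_zero.mp this).resolve_left hvk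
  apply hw0
  funext c
  by_cases hci : c = i
  · rw [hci]; exact hwi
  by_cases hcj : c = j
  · rw [hcj]; exact hwj
  by_cases hck : c = k
  · rw [hck]; exact hwk
  by_cases h : c < k
  · have rc : r c = ⟨(c, k), h⟩ := by simp [hr, rowEmbFun, hci, hcj, hck, h]; rfl
    have ec : v k * w c - q c k * v c * w k = 0 := by
      have := key c; rw [rc, mulVec_apply q v w h] at this; exact this
    have : v k * w c = 0 := by linear_combination ec + q c k * v c * hwk
    exact (mul_eq_zero.mp this).resolve_left hvk
  · have hkc : k < c := (not_lt.mp h).lt_of_ne (Ne.symm hck)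
    have rc : r c = ⟨(k, c), hkc⟩ := by simp [hr, rowEmbFun, hci, hcj, hck, h]; rfl
    have ec : v c * w k - q k c * v k * w c = 0 := by
      have := key c; rw [rc, mulVec_apply q v w hkc] at this; exact this
    have : q k c * (v k * w c) = 0 := by linear_combination -ec + w k * (by rfl : v c = v c) + v c * hwk
    have := (mul_eq_zero.mp this).resolve_left (hq k c hkc)
    exact (mul_eq_zero.mp this).resolve_left hvk

-- NEW MATERIAL
/-- Cocycle condition on the support. -/
def Coc (q : Fin n → Fin n → K) (v : Fin n → K) : Prop :=
  ∀ i j k : Fin n, i < j → j < k → v i ≠ 0 → v j ≠ 0 → v k ≠ 0 → q i j * q j k = q i k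

lemma coc_congr {q : Fin n → Fin n → K} {v v' : Fin n → K}
    (h : ∀ c, v c ≠ 0 ↔ v' c ≠ 0) (hc : Coc q v) : Coc q v' :=
  fun i j k hij hjk hi hj hk =>
    hc i j k hij hjk ((h i).mpr hi) ((h j).mpr hj) ((h k).mpr hk)

noncomputable def sigVec (q : Fin n → Fin n → K) (v : Fin n → K) (hv : v ≠ 0) :
    Fin n → K :=
  fun c => (if c < qmax v hv then q c (qmax v hv) else 1) * v c

lemma sigVec_supp (q : Fin n → Fin n → K) (hq : ∀ i j : Fin n, i < j → q i j ≠ 0)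
    {v : Fin n → K} (hv : v ≠ 0) (c : Fin n) :
    sigVec q v hv c ≠ 0 ↔ v c ≠ 0 := by
  unfold sigVec
  by_cases h : c < qmax v hv
  · simp [h, hq c _ h]
  · simp [h]

lemma sigVec_ne_zero (q : Fin n → Fin n → K) {v : Fin n → K} (hv : v ≠ 0) :
    sigVec q v hv ≠ 0 := by
  intro h
  apply qmax_ne v hv
  have h2 := congrFun h (qmax v hv)
  simpa [sigVec, lt_irrefl] using h2

lemma sigVec_kernel (q : Fin n → Fin n → K) {v : Fin n → K} (hv : v ≠ 0)
    (hcoc : Coc q v) : quantumMatrixFn q v *ᵥ sigVec q v hv = 0 := by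
  funext r
  obtain ⟨⟨i, j⟩, hij⟩ := r
  rw [mulVec_apply q v _ hij]; change _ = (0 : K)
  by_cases hi : v i = 0
  · simp [sigVec, hi]
  by_cases hj : v j = 0
  · simp [sigVec, hj]
  have hjm : j ≤ qmax v hv := le_qmax hv hj
  rcases eq_or_lt_of_le hjm with h1 | h1
  · subst h1
    simp only [sigVec, if_pos (show i < qmax v hv from hij), if_neg (lt_irrefl (qmax v hv))]
    ring
  · have him : i < qmax v hv := hij.trans h1
    have hcm := hcoc i j (qmax v hv) hij h1 hi hj (qmax_ne v hv)
    simp only [sigVec, if_pos him, if_pos h1]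
    linear_combination (-(v i * v j)) * hcm

/-- Uniqueness of the kernel line. -/
lemma kernel_unique (q : Fin n → Fin n → K) (hq : ∀ i j : Fin n, i < j → q i j ≠ 0)
    {v : Fin n → K} (hv : v ≠ 0) {w' : Fin n → K}
    (h : quantumMatrixFn q v *ᵥ w' = 0) :
    w' = (w' (qmax v hv) * (v (qmax v hv))⁻¹) • sigVec q v hv := by
  set m := qmax v hv with hm
  have hvm : v m ≠ 0 := qmax_ne v hv
  have key : ∀ i j (hij : i < j), v j * w' i - q i j * v i * w' j = 0 := by
    intro i j hij
    have h2 := congrFun h (⟨(i, j), hij⟩ : quantumRowIdx n)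
    rw [mulVec_apply q v w' hij] at h2
    exact h2
  funext c
  by_cases hc : v c = 0
  · have hwc : w' c = 0 := by
      rcases lt_trichotomy c m with h1 | h1 | h1
      · have h2 := key c m h1
        have h3 : v m * w' c = 0 := by linear_combination h2 + (q c m * w' m) * hc
        exact (mul_eq_zero.mp h3).resolve_left hvm
      · exact absurd hc (by rw [h1]; exact hvm)
      · have h2 := key m c h1
        have h3 : q m c * (v m * w' c) = 0 := by linear_combination -h2 + w' m * hc
        exact (mul_eq_zero.mp ((mul_eq_zero.mp h3).resolve_left (hq m c h1))).resolve_left hvm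
    simp [hwc, sigVec, hc]
  · have hcm : c ≤ m := le_qmax hv hc
    rcases eq_or_lt_of_le hcm with h1 | h1
    · subst h1
      simp only [Pi.smul_apply, smul_eq_mul, sigVec, ← hm, if_neg (lt_irrefl m)]
      field_simp
    · have h2 := key c m h1
      simp only [Pi.smul_apply, smul_eq_mul, sigVec, ← hm, if_pos h1]
      field_simp
      linear_combination h2
/-- supports of `v` and a nonzero kernel vector agree. -/
lemma kernel_supp (q : Fin n → Fin n → K) (hq : ∀ i j : Fin n, i < j → q i j ≠ 0)
    {v : Fin n → K} (hv : v ≠ 0) {w : Fin n → K} (hw : w ≠ 0)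
    (h : quantumMatrixFn q v *ᵥ w = 0) : ∀ c, w c ≠ 0 ↔ v c ≠ 0 := by
  have hu := kernel_unique q hq hv h
  set c₀ := w (qmax v hv) * (v (qmax v hv))⁻¹ with hc₀
  have hc0 : c₀ ≠ 0 := by
    intro h0
    apply hw
    rw [hu, h0, zero_smul]
  intro c
  rw [hu]
  simp only [Pi.smul_apply, smul_eq_mul, mul_ne_zero_iff]
  constructor
  · intro ⟨_, h2⟩; exact (sigVec_supp q hq hv c).mp h2
  · intro h2; exact ⟨hc0, (sigVec_supp q hq hv c).mpr h2⟩

noncomputable def tauVec (q : Fin n → Fin n → K) (v : Fin n → K) (hv : v ≠ 0) :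
    Fin n → K :=
  fun c => (if c < qmax v hv then (q c (qmax v hv))⁻¹ else 1) * v c

lemma tauVec_supp (q : Fin n → Fin n → K) (hq : ∀ i j : Fin n, i < j → q i j ≠ 0)
    {v : Fin n → K} (hv : v ≠ 0) (c : Fin n) :
    tauVec q v hv c ≠ 0 ↔ v c ≠ 0 := by
  unfold tauVec
  by_cases h : c < qmax v hv
  · simp [h, inv_ne_zero (hq c _ h)]
  · simp [h]

lemma tauVec_ne_zero (q : Fin n → Fin n → K) {v : Fin n → K} (hv : v ≠ 0) :
    tauVec q v hv ≠ 0 := by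
  intro h
  apply qmax_ne v hv
  have h2 := congrFun h (qmax v hv)
  simpa [tauVec, lt_irrefl] using h2

lemma tauVec_kernel (q : Fin n → Fin n → K) (hq : ∀ i j : Fin n, i < j → q i j ≠ 0)
    {v : Fin n → K} (hv : v ≠ 0) (hcoc : Coc q v) :
    quantumMatrixFn q (tauVec q v hv) *ᵥ v = 0 := by
  funext r
  obtain ⟨⟨i, j⟩, hij⟩ := r
  rw [mulVec_apply q _ v hij]; change _ = (0 : K)
  by_cases hi : v i = 0
  · simp [tauVec, hi]
  by_cases hj : v j = 0
  · simp [tauVec, hj]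
  have hjm : j ≤ qmax v hv := le_qmax hv hj
  have him : i < qmax v hv := lt_of_lt_of_le hij hjm
  have hqim : q i (qmax v hv) ≠ 0 := hq i _ him
  rcases eq_or_lt_of_le hjm with h1 | h1
  · subst h1
    simp only [tauVec, if_pos (show i < qmax v hv from him), if_neg (lt_irrefl (qmax v hv))]
    field_simp
    ring
  · have hcm := hcoc i j (qmax v hv) hij h1 hi hj (qmax_ne v hv)
    have hqjm : q j (qmax v hv) ≠ 0 := hq j _ h1
    simp only [tauVec, if_pos him, if_pos h1]
    field_simp
    linear_combination (-(v i * v j)) * hcm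

lemma tau_sig (q : Fin n → Fin n → K) (hq : ∀ i j : Fin n, i < j → q i j ≠ 0)
    {v : Fin n → K} (hv : v ≠ 0) :
    tauVec q (sigVec q v hv) (sigVec_ne_zero q hv) = v := by
  funext c
  have hmm : qmax (sigVec q v hv) (sigVec_ne_zero q hv) = qmax v hv :=
    qmax_congr _ _ (sigVec_supp q hq hv)
  simp only [tauVec, sigVec, hmm]
  by_cases h : c < qmax v hv
  · simp only [if_pos h]
    exact inv_mul_cancel_left₀ (hq c _ h) (v c)
  · simp [h]

lemma tauVec_smul (q : Fin n → Fin n → K) (a : K) (ha : a ≠ 0)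
    {v : Fin n → K} (hv : v ≠ 0) (hav : a • v ≠ 0) :
    tauVec q (a • v) hav = a • tauVec q v hv := by
  have hmm : qmax (a • v) hav = qmax v hv :=
    qmax_congr _ _ (fun c => by simp [Pi.smul_apply, smul_eq_mul, ha])
  funext c
  simp only [tauVec, hmm, Pi.smul_apply, smul_eq_mul]
  ring


lemma mk_sigVec_proof_irrel (q : Fin n → Fin n → K) {x y : Fin n → K} (h : x = y)
    (hx : x ≠ 0) (hy : y ≠ 0) :
    Projectivization.mk K (sigVec q x hx) (sigVec_ne_zero q hx) =
      Projectivization.mk K (sigVec q y hy) (sigVec_ne_zero q hy) := by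
  subst h; rfl

lemma tauVec_proof_irrel (q : Fin n → Fin n → K) {x y : Fin n → K} (h : x = y)
    (hx : x ≠ 0) (hy : y ≠ 0) : tauVec q x hx = tauVec q y hy := by
  subst h; rfl

end QAux

/-- for every `[v] ∈ E` there is a nonzero `w` with `F(v)·w = 0`, unique
up to scalar, and `[w] ∈ E`; the induced map `σ : E → E` is well defined and bijective,
`X₂ = {([v], σ([v])) : [v] ∈ E}`, and the first projection is a bijection from `X₂`
onto `E`. -/
theorem quantumAffineN_sigma_bijective {K : Type*} [Field K] {n : ℕ} (hn : 2 ≤ n)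
    (q : Fin n → Fin n → K) (hq : ∀ i j : Fin n, i < j → q i j ≠ 0) :
    (∀ (v : Fin n → K) (hv : v ≠ 0), Projectivization.mk K v hv ∈ quantumAffineNE K q →
      ∃ (w : Fin n → K) (hw : w ≠ 0), (quantumMatrixFn q v) *ᵥ w = 0 ∧
        (∀ w' : Fin n → K, (quantumMatrixFn q v) *ᵥ w' = 0 → ∃ c : K, w' = c • w) ∧
        Projectivization.mk K w hw ∈ quantumAffineNE K q) ∧
    ∃ σ : quantumAffineNE K q → quantumAffineNE K q,
      Function.Bijective σ ∧
      (∀ (v : Fin n → K) (hv : v ≠ 0) (w : Fin n → K) (hw : w ≠ 0),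
        (quantumMatrixFn q v) *ᵥ w = 0 →
        ∀ (hvE : Projectivization.mk K v hv ∈ quantumAffineNE K q)
          (hwE : Projectivization.mk K w hw ∈ quantumAffineNE K q),
          σ ⟨Projectivization.mk K v hv, hvE⟩ = ⟨Projectivization.mk K w hw, hwE⟩) ∧
      quantumAffineNX2 K q =
        {pq | ∃ p : quantumAffineNE K q,
          pq = ((p : Projectivization K (Fin n → K)),
                (σ p : Projectivization K (Fin n → K)))} ∧
      Set.BijOn Prod.fst (quantumAffineNX2 K q) (quantumAffineNE K q) := by
  classical
  open QAux Projectivization in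
  -- well-definedness at the vector level: any nonzero kernel vector spans the same line
  have hwd : ∀ (v : Fin n → K) (hv : v ≠ 0) (w : Fin n → K) (hw : w ≠ 0),
      (quantumMatrixFn q v) *ᵥ w = 0 →
      Projectivization.mk K w hw =
        Projectivization.mk K (sigVec q v hv) (sigVec_ne_zero q hv) := by
    intro v hv w hw hker
    have hc := kernel_unique q hq hv hker
    set c := w (qmax v hv) * (v (qmax v hv))⁻¹ with hcdef
    have hc0 : c ≠ 0 := by
      intro h0
      apply hw
      rw [hc, h0, zero_smul]
    rw [Projectivization.mk_eq_mk_iff]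
    exact ⟨Units.mk0 c hc0, by rw [Units.smul_def, Units.val_mk0, ← hc]⟩
  have hwd2 : ∀ (v : Fin n → K) (hv : v ≠ 0) (w : Fin n → K) (hw : w ≠ 0),
      (quantumMatrixFn q v) *ᵥ w = 0 →
      Projectivization.mk K w hw =
        Projectivization.mk K (sigVec q (Projectivization.mk K v hv).rep
          (Projectivization.rep_nonzero _)) (sigVec_ne_zero q _) := by
    intro v hv w hw hker
    set u := (Projectivization.mk K v hv).rep with hudef
    have hu : u ≠ 0 := Projectivization.rep_nonzero _
    obtain ⟨a, ha⟩ := (Projectivization.mk_eq_mk_iff K u v hu hv).mp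
      (Projectivization.mk_rep _)
    have hker' : quantumMatrixFn q u *ᵥ w = 0 := by
      rw [← ha, Units.smul_def, mulVec_smul_left, hker, smul_zero]
    exact hwd u hu w hw hker'
  -- σ membership: [sigVec v] ∈ E whenever [v] ∈ E
  have sigE : ∀ (v : Fin n → K) (hv : v ≠ 0),
      Projectivization.mk K v hv ∈ quantumAffineNE K q →
      Projectivization.mk K (sigVec q v hv) (sigVec_ne_zero q hv) ∈ quantumAffineNE K q := by
    intro v hv hE
    have hcoc : Coc q v := coc_of_mem_E q hq hv hE
    have hcoc' : Coc q (sigVec q v hv) :=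
      coc_congr (fun c => (sigVec_supp q hq hv c).symm) hcoc
    exact mem_E_of_kernel q (sigVec_ne_zero q hv)
      (sigVec_ne_zero q (sigVec_ne_zero q hv))
      (sigVec_kernel q (sigVec_ne_zero q hv) hcoc')
  have part1 : ∀ (v : Fin n → K) (hv : v ≠ 0),
      Projectivization.mk K v hv ∈ quantumAffineNE K q →
      ∃ (w : Fin n → K) (hw : w ≠ 0), (quantumMatrixFn q v) *ᵥ w = 0 ∧
        (∀ w' : Fin n → K, (quantumMatrixFn q v) *ᵥ w' = 0 → ∃ c : K, w' = c • w) ∧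
        Projectivization.mk K w hw ∈ quantumAffineNE K q := by
    intro v hv hE
    have hcoc : Coc q v := coc_of_mem_E q hq hv hE
    exact ⟨sigVec q v hv, sigVec_ne_zero q hv, sigVec_kernel q hv hcoc,
      fun w' hw' => ⟨_, kernel_unique q hq hv hw'⟩, sigE v hv hE⟩
  refine ⟨part1, ?_⟩
  have repE : ∀ p : quantumAffineNE K q,
      Projectivization.mk K (p : Projectivization K (Fin n → K)).rep
        (Projectivization.rep_nonzero _) ∈ quantumAffineNE K q := by
    intro p
    rw [Projectivization.mk_rep]
    exact p.2
  refine ⟨fun p => ⟨Projectivization.mk K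
      (sigVec q (p : Projectivization K (Fin n → K)).rep (Projectivization.rep_nonzero _))
      (sigVec_ne_zero q _), sigE _ _ (repE p)⟩, ?_, ?_, ?_, ?_⟩
  case refine_2 =>
    -- σ is well defined
    intro v hv w hw hker hvE hwE
    apply Subtype.ext
    show Projectivization.mk K
        (sigVec q (Projectivization.mk K v hv).rep (Projectivization.rep_nonzero _))
        (sigVec_ne_zero q _) = Projectivization.mk K w hw
    set u := (Projectivization.mk K v hv).rep with hudef
    have hu : u ≠ 0 := Projectivization.rep_nonzero _
    obtain ⟨a, ha⟩ := (Projectivization.mk_eq_mk_iff K u v hu hv).mp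
      (Projectivization.mk_rep _)
    have hker' : quantumMatrixFn q u *ᵥ w = 0 := by
      rw [← ha, Units.smul_def, mulVec_smul_left, hker, smul_zero]
    exact (hwd u hu w hw hker').symm
  case refine_1 =>
    constructor
    · -- injective
      intro p₁ p₂ h
      have h1 : Projectivization.mk K
          (sigVec q (p₁ : Projectivization K (Fin n → K)).rep (Projectivization.rep_nonzero _))
          (sigVec_ne_zero q _) = Projectivization.mk K
          (sigVec q (p₂ : Projectivization K (Fin n → K)).rep (Projectivization.rep_nonzero _))
          (sigVec_ne_zero q _) := congrArg Subtype.val h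
      set u₁ := (p₁ : Projectivization K (Fin n → K)).rep with hu1
      set u₂ := (p₂ : Projectivization K (Fin n → K)).rep with hu2
      have h₁ : u₁ ≠ 0 := Projectivization.rep_nonzero _
      have h₂ : u₂ ≠ 0 := Projectivization.rep_nonzero _
      obtain ⟨a, ha⟩ := (Projectivization.mk_eq_mk_iff K _ _ _ _).mp h1
      have ha' : (a : K) ≠ 0 := a.ne_zero
      have hsm : ((a : K) • sigVec q u₂ h₂) ≠ 0 :=
        smul_ne_zero ha' (sigVec_ne_zero q h₂)
      have e0 : sigVec q u₁ h₁ = (a : K) • sigVec q u₂ h₂ := by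
        rw [← Units.smul_def, ha]
      have e1 : u₁ = (a : K) • u₂ := by
        calc u₁ = tauVec q (sigVec q u₁ h₁) (sigVec_ne_zero q h₁) :=
              (tau_sig q hq h₁).symm
          _ = tauVec q ((a : K) • sigVec q u₂ h₂) hsm :=
              tauVec_proof_irrel q e0 _ _
          _ = (a : K) • tauVec q (sigVec q u₂ h₂) (sigVec_ne_zero q h₂) :=
              tauVec_smul q (a : K) ha' (sigVec_ne_zero q h₂) hsm
          _ = (a : K) • u₂ := by rw [tau_sig q hq h₂]
      have : Projectivization.mk K u₁ h₁ = Projectivization.mk K u₂ h₂ :=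
        (Projectivization.mk_eq_mk_iff K _ _ _ _).mpr ⟨a, by rw [Units.smul_def, ← e1]⟩
      apply Subtype.ext
      rw [← Projectivization.mk_rep (p₁ : Projectivization K (Fin n → K)),
        ← Projectivization.mk_rep (p₂ : Projectivization K (Fin n → K))]
      exact this
    · -- surjective
      intro p
      set u := (p : Projectivization K (Fin n → K)).rep with hudef
      have hu : u ≠ 0 := Projectivization.rep_nonzero _
      have hE : Projectivization.mk K u hu ∈ quantumAffineNE K q := repE p
      have hcoc : Coc q u := coc_of_mem_E q hq hu hE
      have hker : quantumMatrixFn q (tauVec q u hu) *ᵥ u = 0 :=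
        tauVec_kernel q hq hu hcoc
      have htE : Projectivization.mk K (tauVec q u hu) (tauVec_ne_zero q hu)
          ∈ quantumAffineNE K q :=
        mem_E_of_kernel q (tauVec_ne_zero q hu) hu hker
      refine ⟨⟨Projectivization.mk K (tauVec q u hu) (tauVec_ne_zero q hu), htE⟩, ?_⟩
      apply Subtype.ext
      show Projectivization.mk K
          (sigVec q (Projectivization.mk K (tauVec q u hu) (tauVec_ne_zero q hu)).rep
            (Projectivization.rep_nonzero _)) (sigVec_ne_zero q _)
          = (p : Projectivization K (Fin n → K))
      set t := (Projectivization.mk K (tauVec q u hu) (tauVec_ne_zero q hu)).rep with htdef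
      have ht : t ≠ 0 := Projectivization.rep_nonzero _
      obtain ⟨a, ha⟩ := (Projectivization.mk_eq_mk_iff K t (tauVec q u hu) ht _).mp
        (Projectivization.mk_rep _)
      have hker' : quantumMatrixFn q t *ᵥ u = 0 := by
        rw [← ha, Units.smul_def, mulVec_smul_left, hker, smul_zero]
      rw [← Projectivization.mk_rep (p : Projectivization K (Fin n → K))]
      exact ((hwd t ht u hu hker').symm).trans rfl
  case refine_3 =>
    -- X₂ equality
    ext pq
    constructor
    · rintro ⟨v, hv, w, hw, hpq, hker⟩
      have hvE : Projectivization.mk K v hv ∈ quantumAffineNE K q :=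
        mem_E_of_kernel q hv hw hker
      have hcoc : Coc q v := coc_of_mem_E q hq hv hvE
      have hsupp := kernel_supp q hq hv hw hker
      have hcocw : Coc q w := coc_congr (fun c => (hsupp c).symm) hcoc
      have hwE : Projectivization.mk K w hw ∈ quantumAffineNE K q :=
        mem_E_of_kernel q hw (sigVec_ne_zero q hw) (sigVec_kernel q hw hcocw)
      refine ⟨⟨Projectivization.mk K v hv, hvE⟩, ?_⟩
      rw [hpq]
      have hmk : Projectivization.mk K w hw =
          Projectivization.mk K (sigVec q (Projectivization.mk K v hv).rep
            (Projectivization.rep_nonzero _)) (sigVec_ne_zero q _) := by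
        set u := (Projectivization.mk K v hv).rep with hudef
        have hu : u ≠ 0 := Projectivization.rep_nonzero _
        obtain ⟨a, ha⟩ := (Projectivization.mk_eq_mk_iff K u v hu hv).mp
          (Projectivization.mk_rep _)
        have hker' : quantumMatrixFn q u *ᵥ w = 0 := by
          rw [← ha, Units.smul_def, mulVec_smul_left, hker, smul_zero]
        exact hwd u hu w hw hker'
      exact Prod.ext rfl hmk
    · rintro ⟨p, rfl⟩
      have hE := repE p
      have hcoc : Coc q (p : Projectivization K (Fin n → K)).rep :=
        coc_of_mem_E q hq _ hE
      refine ⟨(p : Projectivization K (Fin n → K)).rep, Projectivization.rep_nonzero _,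
        sigVec q (p : Projectivization K (Fin n → K)).rep (Projectivization.rep_nonzero _),
        sigVec_ne_zero q _, ?_, sigVec_kernel q _ hcoc⟩
      exact Prod.ext (Projectivization.mk_rep _).symm rfl
  case refine_4 =>
    refine ⟨?_, ?_, ?_⟩
    · rintro pq ⟨v, hv, w, hw, hpq, hker⟩
      rw [hpq]
      exact mem_E_of_kernel q hv hw hker
    · rintro pq₁ ⟨v₁, hv₁, w₁, hw₁, hpq₁, hker₁⟩ pq₂ ⟨v₂, hv₂, w₂, hw₂, hpq₂, hker₂⟩ hfst
      rw [hpq₁, hpq₂] at hfst ⊢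
      have h12 : Projectivization.mk K v₁ hv₁ = Projectivization.mk K v₂ hv₂ := hfst
      have e₁ := hwd2 v₁ hv₁ w₁ hw₁ hker₁
      have e₂ := hwd2 v₂ hv₂ w₂ hw₂ hker₂
      refine Prod.ext h12 ?_
      exact e₁.trans ((mk_sigVec_proof_irrel q
        (congrArg Projectivization.rep h12) _ _).trans e₂.symm)
    · rintro x hx
      have hxE : Projectivization.mk K x.rep (Projectivization.rep_nonzero x)
          ∈ quantumAffineNE K q := by
        rw [Projectivization.mk_rep]; exact hx
      have hcoc : Coc q x.rep := coc_of_mem_E q hq _ hxE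
      refine ⟨(x, Projectivization.mk K
          (sigVec q x.rep (Projectivization.rep_nonzero x)) (sigVec_ne_zero q _)),
        ⟨x.rep, Projectivization.rep_nonzero x,
          sigVec q x.rep (Projectivization.rep_nonzero x), sigVec_ne_zero q _,
          Prod.ext (Projectivization.mk_rep x).symm rfl,
          sigVec_kernel q _ hcoc⟩, rfl⟩
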